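/- arXiv:1711.00488 — 2 statements merged into one kernel-verified Lean document; each statement's English description precedes it below -/
import Mathlib

section
/- The subgroup K = {f_α : α ∈ Sym([n]), α(1)=1, α(2)=2} of Aut(L(n)) has exactly seven orbits on the vertices of L(n): O_1 = {[1,12]}, O_2 = {[1,1i] : 3 ≤ i ≤ n}, O_3 = {[2,12]}, O_4 = {[2,2i] : 3 ≤ i ≤ n}, O_5 = {[i,1i] : 3 ≤ i ≤ n}, O_6 = {[i,2i] : 3 ≤ i ≤ n}, O_7 = {[i,ij] : 3 ≤ i,j ≤ n, i ≠ j}. -/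
set_option linter.unusedVariables false

open SimpleGraph Finset

/-- Vertices of `H(n)`: subsets of `[n]` of size 1 or 2. -/
def HV (n : ℕ) := {s : Finset (Fin n) // s.card = 1 ∨ s.card = 2}

instance (n : ℕ) : DecidableEq (HV n) := Subtype.instDecidableEq
instance (n : ℕ) : Fintype (HV n) := Subtype.fintype _

/-- The graph `H(n)`: adjacency is strict inclusion. -/
def Hgraph (n : ℕ) : SimpleGraph (HV n) where
  Adj x y := x.1 ⊂ y.1 ∨ y.1 ⊂ x.1
  symm := ⟨fun x y h => h.symm⟩
  loopless := ⟨fun x h => (ssubset_irrefl x.1) (h.elim id id)⟩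

instance (n : ℕ) : DecidableRel (Hgraph n).Adj :=
  fun x y => inferInstanceAs (Decidable (_ ∨ _))

noncomputable instance (n : ℕ) : DecidableRel ((Hgraph n).lineGraph).Adj :=
  Classical.decRel _

def Hv1 {n : ℕ} (i : Fin n) : HV n := ⟨{i}, Or.inl (Finset.card_singleton i)⟩

def Hv2 {n : ℕ} (i j : Fin n) (h : i ≠ j) : HV n := ⟨{i, j}, Or.inr (Finset.card_pair h)⟩

lemma Hadj12 {n : ℕ} (i j : Fin n) (h : i ≠ j) : (Hgraph n).Adj (Hv1 i) (Hv2 i j h) :=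
  Or.inl (Finset.ssubset_iff_subset_ne.mpr ⟨by simp [Hv1, Hv2, Finset.singleton_subset_iff], by
    simp only [Hv1, Hv2]
    intro he
    apply h
    have : j ∈ ({i} : Finset (Fin n)) := by rw [he]; simp
    simpa [eq_comm] using this⟩)

/-- The vertex `[i, ij]` of the line graph `L(n)`, i.e. the edge `{{i},{i,j}}` of `H(n)`. -/
def edgeV {n : ℕ} (i j : Fin n) (h : i ≠ j) : (Hgraph n).edgeSet :=
  ⟨s(Hv1 i, Hv2 i j h), (Hgraph n).mem_edgeSet.mpr (Hadj12 i j h)⟩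

def permMap {n : ℕ} (α : Equiv.Perm (Fin n)) (s : HV n) : HV n :=
  ⟨s.1.image α, by rw [Finset.card_image_of_injective _ α.injective]; exact s.2⟩

def permHom {n : ℕ} (α : Equiv.Perm (Fin n)) : Hgraph n →g Hgraph n where
  toFun := permMap α
  map_rel' := by
    intro x y hxy
    rcases hxy with h | h
    · exact Or.inl ((Finset.image_ssubset_image α.injective).mpr h)
    · exact Or.inr ((Finset.image_ssubset_image α.injective).mpr h)

/-- The map induced by a permutation `α` of `[n]` on the vertices of the line graph `L(n)`. -/
def permEdge {n : ℕ} (α : Equiv.Perm (Fin n)) :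
    (Hgraph n).edgeSet → (Hgraph n).edgeSet :=
  (permHom α).mapEdgeSet

lemma edgeV_congr {n : ℕ} {a b a' b' : Fin n} (h : a ≠ b) (h' : a' ≠ b')
    (ha : a = a') (hb : b = b') : edgeV a b h = edgeV a' b' h' := by
  subst ha; subst hb; rfl

lemma edgeV_inj {n : ℕ} {a b a' b' : Fin n} {h : a ≠ b} {h' : a' ≠ b'}
    (he : edgeV a b h = edgeV a' b' h') : a = a' ∧ b = b' := by
  have hv : s(Hv1 a, Hv2 a b h) = s(Hv1 a', Hv2 a' b' h') := congrArg Subtype.val he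
  rw [Sym2.eq_iff] at hv
  rcases hv with ⟨h1, h2⟩ | ⟨h1, h2⟩
  · have ha : a = a' := by
      have := congrArg Subtype.val h1
      simpa [Hv1] using this
    subst ha
    have h2' : ({a, b} : Finset (Fin n)) = {a, b'} := congrArg Subtype.val h2
    have hb : b ∈ ({a, b'} : Finset (Fin n)) := by
      rw [← h2']; simp
    rcases Finset.mem_insert.mp hb with hb | hb
    · exact absurd hb.symm h
    · exact ⟨rfl, by simpa using hb⟩
  · exfalso
    have := congrArg (fun s : HV n => s.1.card) h1
    simp [Hv1, Hv2, Finset.card_pair h'] at this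

lemma ssubset_struct {n : ℕ} {x y : HV n} (hss : x.1 ⊂ y.1) :
    ∃ i j, ∃ h : i ≠ j, x = Hv1 i ∧ y = Hv2 i j h := by
  have hlt := Finset.card_lt_card hss
  have hx1 : x.1.card = 1 := by rcases x.2 with h | h <;> rcases y.2 with h' | h' <;> omega
  have hy2 : y.1.card = 2 := by rcases x.2 with h | h <;> rcases y.2 with h' | h' <;> omega
  obtain ⟨i, hx⟩ := Finset.card_eq_one.mp hx1
  obtain ⟨a, b, hab, hy⟩ := Finset.card_eq_two.mp hy2
  have hi : i ∈ y.1 := hss.subset (by rw [hx]; exact Finset.mem_singleton_self i)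
  rw [hy] at hi
  rcases Finset.mem_insert.mp hi with hi | hi
  · subst hi
    exact ⟨i, b, hab, Subtype.ext hx, Subtype.ext (by rw [hy]; rfl)⟩
  · have hi : i = b := by simpa using hi
    subst hi
    exact ⟨i, a, hab.symm, Subtype.ext hx, Subtype.ext (by rw [hy, Finset.pair_comm]; rfl)⟩

lemma edge_cases {n : ℕ} (e : (Hgraph n).edgeSet) :
    ∃ i j, ∃ h : i ≠ j, e = edgeV i j h := by
  obtain ⟨s, hs⟩ := e
  induction s using Sym2.ind with
  | _ x y =>
    rw [SimpleGraph.mem_edgeSet] at hs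
    rcases hs with hss | hss
    · obtain ⟨i, j, h, hx, hy⟩ := ssubset_struct hss
      exact ⟨i, j, h, Subtype.ext (by subst hx; subst hy; rfl)⟩
    · obtain ⟨i, j, h, hy, hx⟩ := ssubset_struct hss
      exact ⟨i, j, h, Subtype.ext (by subst hx; subst hy; exact Sym2.eq_swap)⟩

lemma permEdge_edgeV {n : ℕ} (α : Equiv.Perm (Fin n)) (i j : Fin n) (h : i ≠ j) :
    permEdge α (edgeV i j h) = edgeV (α i) (α j) (fun he => h (α.injective he)) := by
  apply Subtype.ext
  show Sym2.map (permMap α) s(Hv1 i, Hv2 i j h) = s(Hv1 (α i), Hv2 (α i) (α j) _)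
  have h1 : permMap α (Hv1 i) = Hv1 (α i) := Subtype.ext (by simp [permMap, Hv1])
  have h2 : permMap α (Hv2 i j h) = Hv2 (α i) (α j) (fun he => h (α.injective he)) :=
    Subtype.ext (by simp [permMap, Hv2, Finset.image_insert])
  rw [Sym2.map_pair_eq, h1, h2]

def classif {n : ℕ} (x1 x2 i j : Fin n) : Fin 7 :=
  if i = x1 then (if j = x2 then 0 else 1)
  else if i = x2 then (if j = x1 then 2 else 3)
  else if j = x1 then 4
  else if j = x2 then 5
  else 6

lemma exists_perm_one {n : ℕ} (x1 x2 i i' : Fin n) (hi1 : i ≠ x1) (hi2 : i ≠ x2)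
    (hi'1 : i' ≠ x1) (hi'2 : i' ≠ x2) :
    ∃ α : Equiv.Perm (Fin n), α x1 = x1 ∧ α x2 = x2 ∧ α i = i' :=
  ⟨Equiv.swap i i', Equiv.swap_apply_of_ne_of_ne hi1.symm hi'1.symm,
    Equiv.swap_apply_of_ne_of_ne hi2.symm hi'2.symm, Equiv.swap_apply_left i i'⟩

lemma exists_perm_two {n : ℕ} (x1 x2 i j i' j' : Fin n)
    (hi1 : i ≠ x1) (hi2 : i ≠ x2) (hj1 : j ≠ x1) (hj2 : j ≠ x2) (hij : i ≠ j)
    (hi'1 : i' ≠ x1) (hi'2 : i' ≠ x2) (hj'1 : j' ≠ x1) (hj'2 : j' ≠ x2) (hij' : i' ≠ j') :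
    ∃ α : Equiv.Perm (Fin n), α x1 = x1 ∧ α x2 = x2 ∧ α i = i' ∧ α j = j' := by
  set σ := Equiv.swap i i' with hσ
  have hσx1 : σ x1 = x1 := Equiv.swap_apply_of_ne_of_ne hi1.symm hi'1.symm
  have hσx2 : σ x2 = x2 := Equiv.swap_apply_of_ne_of_ne hi2.symm hi'2.symm
  have hσi : σ i = i' := Equiv.swap_apply_left i i'
  have hσi' : σ i' = i := Equiv.swap_apply_right i i'
  set τ := Equiv.swap (σ j) j' with hτ
  refine ⟨τ * σ, ?_, ?_, ?_, ?_⟩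
  · show τ (σ x1) = x1
    rw [hσx1]
    exact Equiv.swap_apply_of_ne_of_ne (fun he => hj1 (σ.injective (by rw [← he, hσx1])))
      hj'1.symm
  · show τ (σ x2) = x2
    rw [hσx2]
    exact Equiv.swap_apply_of_ne_of_ne (fun he => hj2 (σ.injective (by rw [← he, hσx2])))
      hj'2.symm
  · show τ (σ i) = i'
    rw [hσi]
    refine Equiv.swap_apply_of_ne_of_ne ?_ hij'
    intro he
    exact hij (σ.injective (by rw [hσi, he]))
  · exact Equiv.swap_apply_left (σ j) j'

/-- The subgroup of automorphisms of `L(n)` induced by permutations fixing `x1` and `x2` has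
exactly seven orbits on the vertices of `L(n)`, as listed: each of the seven sets is invariant,
the induced action is transitive on each of them, and they partition the vertex set. -/
theorem stabilizer_seven_orbits (n : ℕ) (hn : 5 ≤ n) (x1 x2 : Fin n) (h12 : x1 ≠ x2)
    (O : Fin 7 → Set ((Hgraph n).edgeSet))
    (hO₁ : O 0 = {edgeV x1 x2 h12})
    (hO₂ : O 1 = {e | ∃ i, ∃ hi : i ≠ x1 ∧ i ≠ x2, e = edgeV x1 i (Ne.symm hi.1)})
    (hO₃ : O 2 = {edgeV x2 x1 (Ne.symm h12)})
    (hO₄ : O 3 = {e | ∃ i, ∃ hi : i ≠ x1 ∧ i ≠ x2, e = edgeV x2 i (Ne.symm hi.2)})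
    (hO₅ : O 4 = {e | ∃ i, ∃ hi : i ≠ x1 ∧ i ≠ x2, e = edgeV i x1 hi.1})
    (hO₆ : O 5 = {e | ∃ i, ∃ hi : i ≠ x1 ∧ i ≠ x2, e = edgeV i x2 hi.2})
    (hO₇ : O 6 = {e | ∃ i j, (i ≠ x1 ∧ i ≠ x2 ∧ j ≠ x1 ∧ j ≠ x2) ∧
      ∃ hij : i ≠ j, e = edgeV i j hij}) :
    (⋃ k, O k) = Set.univ ∧
    (∀ k l, k ≠ l → O k ∩ O l = ∅) ∧
    (∀ k, (∀ α : Equiv.Perm (Fin n), α x1 = x1 → α x2 = x2 → ∀ e ∈ O k, permEdge α e ∈ O k) ∧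
      (∀ e ∈ O k, ∀ e' ∈ O k,
        ∃ α : Equiv.Perm (Fin n), α x1 = x1 ∧ α x2 = x2 ∧ permEdge α e = e')) := by
  have memc : ∀ i j (h : i ≠ j), edgeV i j h ∈ O (classif x1 x2 i j) := by
    intro i j h
    unfold classif
    split_ifs with h1 h2 h3 h4 h5 h6
    · rw [hO₁]; exact edgeV_congr h h12 h1 h2
    · rw [hO₂]; exact ⟨j, ⟨fun hj => h (h1.trans hj.symm), h2⟩, edgeV_congr h _ h1 rfl⟩
    · rw [hO₃]; exact edgeV_congr h _ h3 h4
    · rw [hO₄]; exact ⟨j, ⟨h4, fun hj => h (h3.trans hj.symm)⟩, edgeV_congr h _ h3 rfl⟩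
    · rw [hO₅]; exact ⟨i, ⟨h1, h3⟩, edgeV_congr h _ rfl h5⟩
    · rw [hO₆]; exact ⟨i, ⟨h1, h3⟩, edgeV_congr h _ rfl h6⟩
    · rw [hO₇]; exact ⟨i, j, ⟨h1, h3, h5, h6⟩, h, rfl⟩
  have cmem : ∀ i j (h : i ≠ j) k, edgeV i j h ∈ O k → classif x1 x2 i j = k := by
    intro i j h k hk
    fin_cases k
    · replace hk : edgeV i j h ∈ O 0 := hk
      show classif x1 x2 i j = 0
      rw [hO₁] at hk
      obtain ⟨hi, hj⟩ := edgeV_inj hk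
      simp [classif, hi, hj]
    · replace hk : edgeV i j h ∈ O 1 := hk
      show classif x1 x2 i j = 1
      rw [hO₂] at hk
      obtain ⟨a, ha, heq⟩ := hk
      obtain ⟨hi, hj⟩ := edgeV_inj heq
      simp [classif, hi, hj, ha.2]
    · replace hk : edgeV i j h ∈ O 2 := hk
      show classif x1 x2 i j = 2
      rw [hO₃] at hk
      obtain ⟨hi, hj⟩ := edgeV_inj hk
      simp [classif, hi, hj, Ne.symm h12]
    · replace hk : edgeV i j h ∈ O 3 := hk
      show classif x1 x2 i j = 3
      rw [hO₄] at hk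
      obtain ⟨a, ha, heq⟩ := hk
      obtain ⟨hi, hj⟩ := edgeV_inj heq
      simp [classif, hi, hj, Ne.symm h12, ha.1]
    · replace hk : edgeV i j h ∈ O 4 := hk
      show classif x1 x2 i j = 4
      rw [hO₅] at hk
      obtain ⟨a, ha, heq⟩ := hk
      obtain ⟨hi, hj⟩ := edgeV_inj heq
      simp [classif, hi, hj, ha.1, ha.2]
    · replace hk : edgeV i j h ∈ O 5 := hk
      show classif x1 x2 i j = 5
      rw [hO₆] at hk
      obtain ⟨a, ha, heq⟩ := hk
      obtain ⟨hi, hj⟩ := edgeV_inj heq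
      simp [classif, hi, hj, ha.1, ha.2, Ne.symm h12]
    · replace hk : edgeV i j h ∈ O 6 := hk
      show classif x1 x2 i j = 6
      rw [hO₇] at hk
      obtain ⟨a, b, ⟨c1, c2, c3, c4⟩, hab, heq⟩ := hk
      obtain ⟨hi, hj⟩ := edgeV_inj heq
      simp [classif, hi, hj, c1, c2, c3, c4]
  refine ⟨?_, ?_, ?_⟩
  · ext e
    simp only [Set.mem_iUnion, Set.mem_univ, iff_true]
    obtain ⟨i, j, h, rfl⟩ := edge_cases e
    exact ⟨_, memc i j h⟩
  · intro k l hkl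
    ext e
    simp only [Set.mem_inter_iff, Set.mem_empty_iff_false, iff_false, not_and]
    intro hek hel
    obtain ⟨i, j, h, rfl⟩ := edge_cases e
    exact hkl ((cmem i j h k hek).symm.trans (cmem i j h l hel))
  · intro k
    constructor
    · intro α hα1 hα2 e he
      obtain ⟨i, j, h, rfl⟩ := edge_cases e
      rw [permEdge_edgeV]
      have e1 : ∀ a : Fin n, (α a = x1) = (a = x1) := fun a => by
        conv_lhs => rw [← hα1]
        exact propext (Equiv.apply_eq_iff_eq α)
      have e2 : ∀ a : Fin n, (α a = x2) = (a = x2) := fun a => by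
        conv_lhs => rw [← hα2]
        exact propext (Equiv.apply_eq_iff_eq α)
      have hc : classif x1 x2 (α i) (α j) = classif x1 x2 i j := by
        simp only [classif, e1, e2]
      have hk := cmem i j h k he
      rw [← hk, ← hc]
      exact memc (α i) (α j) _
    · intro e he e' he'
      obtain ⟨i, j, h, rfl⟩ := edge_cases e
      obtain ⟨i', j', h', rfl⟩ := edge_cases e'
      fin_cases k
      · replace he : edgeV i j h ∈ O 0 := he
        replace he' : edgeV i' j' h' ∈ O 0 := he'
        rw [hO₁] at he he'
        obtain ⟨hi, hj⟩ := edgeV_inj he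
        obtain ⟨hi', hj'⟩ := edgeV_inj he'
        refine ⟨1, rfl, rfl, ?_⟩
        rw [permEdge_edgeV]
        exact edgeV_congr _ h' (by simp [hi, hi']) (by simp [hj, hj'])
      · replace he : edgeV i j h ∈ O 1 := he
        replace he' : edgeV i' j' h' ∈ O 1 := he'
        rw [hO₂] at he he'
        obtain ⟨a, ha, heq⟩ := he
        obtain ⟨hi, hj⟩ := edgeV_inj heq
        obtain ⟨a', ha', heq'⟩ := he'
        obtain ⟨hi', hj'⟩ := edgeV_inj heq'
        obtain ⟨α, hA1, hA2, hAa⟩ := exists_perm_one x1 x2 a a' ha.1 ha.2 ha'.1 ha'.2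
        refine ⟨α, hA1, hA2, ?_⟩
        rw [permEdge_edgeV]
        exact edgeV_congr _ h' (by rw [hi, hA1, hi']) (by rw [hj, hAa, hj'])
      · replace he : edgeV i j h ∈ O 2 := he
        replace he' : edgeV i' j' h' ∈ O 2 := he'
        rw [hO₃] at he he'
        obtain ⟨hi, hj⟩ := edgeV_inj he
        obtain ⟨hi', hj'⟩ := edgeV_inj he'
        refine ⟨1, rfl, rfl, ?_⟩
        rw [permEdge_edgeV]
        exact edgeV_congr _ h' (by simp [hi, hi']) (by simp [hj, hj'])
      · replace he : edgeV i j h ∈ O 3 := he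
        replace he' : edgeV i' j' h' ∈ O 3 := he'
        rw [hO₄] at he he'
        obtain ⟨a, ha, heq⟩ := he
        obtain ⟨hi, hj⟩ := edgeV_inj heq
        obtain ⟨a', ha', heq'⟩ := he'
        obtain ⟨hi', hj'⟩ := edgeV_inj heq'
        obtain ⟨α, hA1, hA2, hAa⟩ := exists_perm_one x1 x2 a a' ha.1 ha.2 ha'.1 ha'.2
        refine ⟨α, hA1, hA2, ?_⟩
        rw [permEdge_edgeV]
        exact edgeV_congr _ h' (by rw [hi, hA2, hi']) (by rw [hj, hAa, hj'])
      · replace he : edgeV i j h ∈ O 4 := he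
        replace he' : edgeV i' j' h' ∈ O 4 := he'
        rw [hO₅] at he he'
        obtain ⟨a, ha, heq⟩ := he
        obtain ⟨hi, hj⟩ := edgeV_inj heq
        obtain ⟨a', ha', heq'⟩ := he'
        obtain ⟨hi', hj'⟩ := edgeV_inj heq'
        obtain ⟨α, hA1, hA2, hAa⟩ := exists_perm_one x1 x2 a a' ha.1 ha.2 ha'.1 ha'.2
        refine ⟨α, hA1, hA2, ?_⟩
        rw [permEdge_edgeV]
        exact edgeV_congr _ h' (by rw [hi, hAa, hi']) (by rw [hj, hA1, hj'])
      · replace he : edgeV i j h ∈ O 5 := he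
        replace he' : edgeV i' j' h' ∈ O 5 := he'
        rw [hO₆] at he he'
        obtain ⟨a, ha, heq⟩ := he
        obtain ⟨hi, hj⟩ := edgeV_inj heq
        obtain ⟨a', ha', heq'⟩ := he'
        obtain ⟨hi', hj'⟩ := edgeV_inj heq'
        obtain ⟨α, hA1, hA2, hAa⟩ := exists_perm_one x1 x2 a a' ha.1 ha.2 ha'.1 ha'.2
        refine ⟨α, hA1, hA2, ?_⟩
        rw [permEdge_edgeV]
        exact edgeV_congr _ h' (by rw [hi, hAa, hi']) (by rw [hj, hA2, hj'])
      · replace he : edgeV i j h ∈ O 6 := he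
        replace he' : edgeV i' j' h' ∈ O 6 := he'
        rw [hO₇] at he he'
        obtain ⟨a, b, ⟨c1, c2, c3, c4⟩, hab, heq⟩ := he
        obtain ⟨hi, hj⟩ := edgeV_inj heq
        obtain ⟨a', b', ⟨c1', c2', c3', c4'⟩, hab', heq'⟩ := he'
        obtain ⟨hi', hj'⟩ := edgeV_inj heq'
        obtain ⟨α, hA1, hA2, hAa, hAb⟩ :=
          exists_perm_two x1 x2 a b a' b' c1 c2 c3 c4 hab c1' c2' c3' c4' hab'
        refine ⟨α, hA1, hA2, ?_⟩
        rw [permEdge_edgeV]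
        exact edgeV_congr _ h' (by rw [hi, hAa, hi']) (by rw [hj, hAb, hj'])
end

section
/- For n > 3, the set of distinct eigenvalues of the adjacency matrix of L(n) is exactly {-2, -1, 0, n-2, n-1}; in particular L(n) is an integral graph with precisely five distinct eigenvalues. -/
set_option linter.unusedVariables false

open SimpleGraph Finset

section
variable {n : ℕ}

lemma Hv1_ne_Hv2 (i k l : Fin n) (h : k ≠ l) : Hv1 i ≠ Hv2 k l h := by
  intro he
  have := congrArg (fun s => s.1.card) he
  simp [Hv1, Hv2, Finset.card_pair h] at this

lemma Hv1_inj {i k : Fin n} (h : Hv1 i = Hv1 k) : i = k := by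
  have := congrArg (fun s => s.1) h
  simpa [Hv1] using this

lemma Hv2_eq_iff {i j k l : Fin n} (hij : i ≠ j) (hkl : k ≠ l) :
    Hv2 i j hij = Hv2 k l hkl ↔ (i = k ∧ j = l) ∨ (i = l ∧ j = k) := by
  constructor
  · intro h
    have h' : ({i, j} : Finset (Fin n)) = {k, l} := congrArg (fun s => s.1) h
    have hi : i = k ∨ i = l := by
      have : i ∈ ({k, l} : Finset (Fin n)) := by rw [← h']; simp
      simpa using this
    have hj : j = k ∨ j = l := by
      have : j ∈ ({k, l} : Finset (Fin n)) := by rw [← h']; simp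
      simpa using this
    rcases hi with hi | hi <;> rcases hj with hj | hj
    · exact absurd (hi.trans hj.symm) hij
    · exact Or.inl ⟨hi, hj⟩
    · exact Or.inr ⟨hi, hj⟩
    · exact absurd (hi.trans hj.symm) hij
  · rintro (⟨rfl, rfl⟩ | ⟨rfl, rfl⟩)
    · rfl
    · exact Subtype.ext (by simp [Hv2, Finset.pair_comm])

lemma edgeV_eq_iff {i j k l : Fin n} (hij : i ≠ j) (hkl : k ≠ l) :
    edgeV i j hij = edgeV k l hkl ↔ i = k ∧ j = l := by
  constructor
  · intro h
    have h' : s(Hv1 i, Hv2 i j hij) = s(Hv1 k, Hv2 k l hkl) := congrArg (fun e => e.1) h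
    rw [Sym2.eq_iff] at h'
    rcases h' with ⟨h1, h2⟩ | ⟨h1, h2⟩
    · have hik := Hv1_inj h1
      subst hik
      rcases (Hv2_eq_iff hij hkl).mp h2 with ⟨_, hjl⟩ | ⟨hil, hjk⟩
      · exact ⟨rfl, hjl⟩
      · exact absurd hjk hij.symm
    · exact absurd h1 (Hv1_ne_Hv2 i k l hkl)
  · rintro ⟨rfl, rfl⟩; rfl

end
section
variable {n : ℕ}

/-- index type for `L(n)` vertices -/
def Dt (n : ℕ) := {p : Fin n × Fin n // p.1 ≠ p.2}

instance : DecidableEq (Dt n) := Subtype.instDecidableEq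
instance : Fintype (Dt n) := Subtype.fintype _

def toEdge (p : Dt n) : (Hgraph n).edgeSet := edgeV p.1.1 p.1.2 p.2

lemma toEdge_bij : Function.Bijective (toEdge (n := n)) := by
  constructor
  · rintro ⟨⟨i, j⟩, hij⟩ ⟨⟨k, l⟩, hkl⟩ h
    have := (edgeV_eq_iff hij hkl).mp h
    exact Subtype.ext (Prod.ext this.1 this.2)
  · rintro ⟨e, he⟩
    induction e using Sym2.inductionOn with
    | hf x y =>
      have hadj : (Hgraph n).Adj x y := (Hgraph n).mem_edgeSet.mp he
      -- extract representation
      have key : ∀ (a b : HV n), a.1 ⊂ b.1 →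
          ∃ (i j : Fin n) (hij : i ≠ j), a = Hv1 i ∧ b = Hv2 i j hij := by
        intro a b hss
        have hc : a.1.card < b.1.card := Finset.card_lt_card hss
        have ha1 : a.1.card = 1 := by rcases a.2 with h | h <;> rcases b.2 with h' | h' <;> omega
        have hb2 : b.1.card = 2 := by rcases a.2 with h | h <;> rcases b.2 with h' | h' <;> omega
        obtain ⟨i, hi⟩ := Finset.card_eq_one.mp ha1
        obtain ⟨u, v, huv, hb⟩ := Finset.card_eq_two.mp hb2
        have hisub : i ∈ b.1 := hss.subset (by simp [hi])
        rw [hb] at hisub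
        simp only [Finset.mem_insert, Finset.mem_singleton] at hisub
        rcases hisub with rfl | rfl
        · exact ⟨i, v, huv, Subtype.ext hi, Subtype.ext (by rw [hb]; rfl)⟩
        · exact ⟨i, u, Ne.symm huv, Subtype.ext hi,
            Subtype.ext (by rw [hb, Finset.pair_comm]; rfl)⟩
      rcases hadj with hss | hss
      · obtain ⟨i, j, hij, rfl, rfl⟩ := key x y hss
        exact ⟨⟨(i, j), hij⟩, rfl⟩
      · obtain ⟨i, j, hij, rfl, rfl⟩ := key y x hss
        refine ⟨⟨(i, j), hij⟩, ?_⟩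
        exact Subtype.ext (Sym2.eq_swap)

noncomputable def toEquiv (n : ℕ) : Dt n ≃ (Hgraph n).edgeSet := Equiv.ofBijective _ toEdge_bij

lemma lineAdj_iff {i j k l : Fin n} (hij : i ≠ j) (hkl : k ≠ l) :
    ((Hgraph n).lineGraph).Adj (edgeV i j hij) (edgeV k l hkl) ↔
      (i = k ∧ j ≠ l) ∨ (i = l ∧ j = k) := by
  rw [SimpleGraph.lineGraph_adj_iff_exists]
  constructor
  · rintro ⟨hne, v, hv1, hv2⟩
    simp only [edgeV, Sym2.mem_iff] at hv1 hv2
    have hne' : ¬(i = k ∧ j = l) := fun ⟨h1, h2⟩ => hne (by subst h1; subst h2; rfl)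
    rcases hv1 with rfl | rfl <;> rcases hv2 with h | h
    · have hik := Hv1_inj h
      subst hik
      exact Or.inl ⟨rfl, fun hjl => hne' ⟨rfl, hjl⟩⟩
    · exact absurd h (Hv1_ne_Hv2 _ _ _ hkl)
    · exact absurd h.symm (Hv1_ne_Hv2 _ _ _ hij)
    · rcases (Hv2_eq_iff hij hkl).mp h with ⟨h1, h2⟩ | ⟨h1, h2⟩
      · exact absurd ⟨h1, h2⟩ hne'
      · exact Or.inr ⟨h1, h2⟩
  · rintro (⟨rfl, hjl⟩ | ⟨rfl, rfl⟩)
    · refine ⟨fun h => hjl ((edgeV_eq_iff hij hkl).mp h).2, Hv1 i, ?_, ?_⟩ <;>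
        simp [edgeV]
    · refine ⟨?_, Hv2 i j hij, ?_, ?_⟩
      · intro h
        exact hij ((edgeV_eq_iff hij hkl).mp h).1
      · simp [edgeV]
      · simp only [edgeV, Sym2.mem_iff]
        right
        exact ((Hv2_eq_iff hkl hij).mpr (Or.inr ⟨rfl, rfl⟩)).symm

end
section
open Matrix
variable {n : ℕ}

noncomputable def Amat (n : ℕ) : Matrix ((Hgraph n).edgeSet) ((Hgraph n).edgeSet) ℝ :=
  ((Hgraph n).lineGraph).adjMatrix ℝ

noncomputable def Mmat (n : ℕ) : Matrix (Dt n) (Dt n) ℝ :=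
  (Amat n).submatrix (toEquiv n) (toEquiv n)

lemma spectrum_Mmat : spectrum ℝ (Mmat n) = spectrum ℝ (Amat n) := by
  have h := AlgEquiv.spectrum_eq (Matrix.reindexAlgEquiv ℝ ℝ (toEquiv n).symm) (Amat n)
  rw [Matrix.reindexAlgEquiv_apply, Matrix.reindex_apply] at h
  simpa [Mmat, Equiv.symm_symm] using h

lemma Mmat_apply (p q : Dt n) :
    Mmat n p q =
      if (p.1.1 = q.1.1 ∧ ¬ p.1.2 = q.1.2) ∨ (p.1.1 = q.1.2 ∧ p.1.2 = q.1.1) then 1 else 0 := by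
  rcases p with ⟨⟨i, j⟩, hij⟩
  rcases q with ⟨⟨k, l⟩, hkl⟩
  show Amat n (toEdge ⟨(i, j), hij⟩) (toEdge ⟨(k, l), hkl⟩) = _
  rw [Amat, SimpleGraph.adjMatrix_apply]
  simp only [toEdge, lineAdj_iff hij hkl]

lemma sum_Dt (G : Fin n × Fin n → ℝ) (h0 : ∀ k, G (k, k) = 0) :
    ∑ q : Dt n, G q.1 = ∑ r : Fin n × Fin n, G r := by
  classical
  have h1 : ∑ r ∈ Finset.univ.filter (fun r : Fin n × Fin n => r.1 ≠ r.2), G r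
      = ∑ q : {r : Fin n × Fin n // r.1 ≠ r.2}, G q.1 :=
    Finset.sum_subtype _ (by simp) G
  have h2 : ∑ r ∈ Finset.univ.filter (fun r : Fin n × Fin n => r.1 ≠ r.2), G r
      = ∑ r : Fin n × Fin n, G r := by
    refine Finset.sum_filter_of_ne ?_
    rintro ⟨k, l⟩ _ hG
    intro hkl
    have hkl' : k = l := hkl
    subst hkl'
    exact hG (h0 k)
  exact h1.symm.trans h2

lemma aux_sum (W : Fin n × Fin n → ℝ) (i j : Fin n) (hij : i ≠ j) :
    ∑ r : Fin n × Fin n,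
        ((if (i = r.1 ∧ ¬ j = r.2) ∨ (i = r.2 ∧ j = r.1) then (1:ℝ) else 0) * W r)
      = (∑ l, W (i, l)) - W (i, j) + W (j, i) := by
  classical
  have step4 : ∀ r : Fin n × Fin n,
      ((if (i = r.1 ∧ ¬ j = r.2) ∨ (i = r.2 ∧ j = r.1) then (1:ℝ) else 0) * W r)
        = (if r = ((j, i) : Fin n × Fin n) then W r else 0) +
          (if i = r.1 then (W r - (if r.2 = j then W r else 0)) else 0) := by
    rintro ⟨k, l⟩
    by_cases hk : i = k
    · subst hk
      by_cases hl : j = l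
      · subst hl
        have h1 : ¬((i = i ∧ ¬ j = j) ∨ (i = j ∧ j = i)) := by tauto
        have h2 : ¬ ((i, j) : Fin n × Fin n) = (j, i) := by
          simp [Prod.ext_iff]; intro h; exact absurd h hij
        simp [h1, h2]
        exact fun h _ => absurd h hij
      · have h1 : ((i = i ∧ ¬ j = l) ∨ (i = l ∧ j = i)) := Or.inl ⟨rfl, hl⟩
        have h2 : ¬ ((i, l) : Fin n × Fin n) = (j, i) := by
          simp [Prod.ext_iff]; intro h; exact absurd h hij
        have h3 : ¬ (l = j) := fun h => hl h.symm
        simp [h1, h2, h3]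
        exact fun h _ => absurd h hl
    · by_cases h2 : i = l ∧ j = k
      · obtain ⟨rfl, rfl⟩ := h2
        simp [hk]
      · have h1 : ¬((i = k ∧ ¬ j = l) ∨ (i = l ∧ j = k)) := by tauto
        have h3 : ¬ ((k, l) : Fin n × Fin n) = (j, i) := by
          simp only [Prod.ext_iff, not_and]
          intro hkj hli
          exact h2 ⟨hli.symm, hkj.symm⟩
        simp [h1, h3, hk]
        exact fun h4 h5 => absurd ⟨h4, h5⟩ h2
  rw [Finset.sum_congr rfl (fun r _ => step4 r), Finset.sum_add_distrib]
  have hA : ∑ r : Fin n × Fin n, (if r = ((j, i) : Fin n × Fin n) then W r else 0) = W (j, i) := by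
    rw [Finset.sum_ite_eq' Finset.univ ((j, i) : Fin n × Fin n) W]
    simp
  have hB : ∑ r : Fin n × Fin n,
      (if i = r.1 then (W r - (if r.2 = j then W r else 0)) else 0)
      = (∑ l, W (i, l)) - W (i, j) := by
    rw [Fintype.sum_prod_type]
    rw [Finset.sum_eq_single i]
    · rw [Finset.sum_congr rfl (fun l _ => by rw [if_pos rfl])]
      rw [Finset.sum_sub_distrib]
      congr 1
      rw [Finset.sum_ite_eq' Finset.univ j (fun l => W (i, l))]
      simp
    · intro k _ hk
      apply Finset.sum_eq_zero
      intro l _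
      rw [if_neg (fun h => hk h.symm)]
    · intro h
      exact absurd (Finset.mem_univ i) h
  rw [hA, hB]
  ring

/-- extension of a vector on `Dt n` to all pairs, zero on the diagonal -/
def extv (v : Dt n → ℝ) : Fin n × Fin n → ℝ :=
  fun p => if h : p.1 ≠ p.2 then v ⟨p, h⟩ else 0

lemma extv_diag (v : Dt n → ℝ) (k : Fin n) : extv v (k, k) = 0 := by simp [extv]

lemma mulVec_Mmat (v : Dt n → ℝ) (i j : Fin n) (hij : i ≠ j) :
    (Mmat n *ᵥ v) ⟨(i, j), hij⟩ =
      (∑ l, extv v (i, l)) - extv v (i, j) + extv v (j, i) := by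
  classical
  have hWv : ∀ q : Dt n, v q = extv v q.1 := by
    rintro ⟨p, hp⟩
    simp [extv, hp]
  have step1 : (Mmat n *ᵥ v) ⟨(i, j), hij⟩ =
      ∑ q : Dt n,
        ((if (i = q.1.1 ∧ ¬ j = q.1.2) ∨ (i = q.1.2 ∧ j = q.1.1) then (1:ℝ) else 0)
          * extv v q.1) := by
    simp only [Matrix.mulVec, dotProduct]
    refine Finset.sum_congr rfl ?_
    intro q _
    show Mmat n ⟨(i, j), hij⟩ q * v q = _
    exact (congrArg (· * v q) (Mmat_apply _ _)).trans (by rw [hWv q])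
  rw [step1]
  rw [sum_Dt (fun r : Fin n × Fin n =>
      (if (i = r.1 ∧ ¬ j = r.2) ∨ (i = r.2 ∧ j = r.1) then (1:ℝ) else 0) * extv v r)
    (fun k => by simp [extv_diag])]
  exact aux_sum (extv v) i j hij

end
section
open Matrix
variable {n : ℕ}

lemma matrix_mem_spectrum_iff {m : Type*} [Fintype m] [DecidableEq m] (M : Matrix m m ℝ) (μ : ℝ) :
    μ ∈ spectrum ℝ M ↔ ∃ v : m → ℝ, v ≠ 0 ∧ M.mulVec v = μ • v := by
  rw [← AlgEquiv.spectrum_eq (Matrix.toLinAlgEquiv' (R := ℝ) (n := m)) M,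
    ← Module.End.hasEigenvalue_iff_mem_spectrum, Module.End.hasEigenvalue_iff,
    Submodule.ne_bot_iff]
  constructor
  · rintro ⟨v, hv, hv0⟩
    rw [Module.End.mem_eigenspace_iff, Matrix.toLinAlgEquiv'_apply] at hv
    exact ⟨v, hv0, hv⟩
  · rintro ⟨v, hv0, hv⟩
    refine ⟨v, ?_, hv0⟩
    rw [Module.End.mem_eigenspace_iff, Matrix.toLinAlgEquiv'_apply]
    exact hv

lemma spec_iff (n : ℕ) (μ : ℝ) :
    μ ∈ spectrum ℝ (((Hgraph n).lineGraph).adjMatrix ℝ) ↔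
      ∃ W : Fin n × Fin n → ℝ, W ≠ 0 ∧ (∀ k, W (k, k) = 0) ∧
        ∀ i j, i ≠ j → (∑ l, W (i, l)) - W (i, j) + W (j, i) = μ * W (i, j) := by
  have hA : (((Hgraph n).lineGraph).adjMatrix ℝ) = Amat n := rfl
  rw [hA, ← spectrum_Mmat, matrix_mem_spectrum_iff]
  constructor
  · rintro ⟨v, hv0, hv⟩
    refine ⟨extv v, ?_, fun k => extv_diag v k, ?_⟩
    · intro h
      apply hv0
      funext q
      have h1 : extv v q.1 = 0 := by rw [h]; rfl
      rcases q with ⟨p, hp⟩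
      show v ⟨p, hp⟩ = (0:ℝ)
      simpa [extv, hp] using h1
    · intro i j hij
      have h1 := congrFun hv ⟨(i, j), hij⟩
      rw [mulVec_Mmat v i j hij] at h1
      rw [h1]
      show μ * v ⟨(i, j), hij⟩ = _
      simp [extv, hij]
  · rintro ⟨W, hW0, hdiag, heq⟩
    refine ⟨fun q => W q.1, ?_, ?_⟩
    · obtain ⟨p, hp⟩ := Function.ne_iff.mp hW0
      have hp12 : p.1 ≠ p.2 := by
        intro h
        apply hp
        have h2 : W (p.1, p.2) = 0 := by rw [h]; exact hdiag p.2
        simpa using h2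
      intro h
      have h3 : W p = 0 := congrFun h ⟨p, hp12⟩
      exact hp (by simpa using h3)
    · have hext : extv (fun q : Dt n => W q.1) = W := by
        funext p
        by_cases hp : p.1 ≠ p.2
        · simp [extv, hp]
        · push_neg at hp
          rcases p with ⟨a, b⟩
          have hab : a = b := hp
          subst hab
          simpa [extv] using (hdiag a).symm
      funext q
      rcases q with ⟨⟨i, j⟩, hij⟩
      rw [mulVec_Mmat _ i j hij, hext]
      show _ = μ * W (i, j)
      exact heq i j hij

lemma eigen_zero (n : ℕ) (hn : 3 < n) (μ : ℝ)
    (hm2 : μ ≠ -2) (hm1 : μ ≠ -1) (hm0 : μ ≠ 0)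
    (hn2 : μ ≠ (n : ℝ) - 2) (hn1 : μ ≠ (n : ℝ) - 1)
    (W : Fin n × Fin n → ℝ) (hdiag : ∀ k, W (k, k) = 0)
    (heq : ∀ i j, i ≠ j → (∑ l, W (i, l)) - W (i, j) + W (j, i) = μ * W (i, j)) :
    W = 0 := by
  classical
  have hstar : ∀ i j, i ≠ j → (∑ l, W (i, l)) + W (j, i) = (μ + 1) * W (i, j) := by
    intro i j hij
    linear_combination heq i j hij
  have hcardn : ∀ i : Fin n, ((Finset.univ.erase i).card : ℝ) = (n : ℝ) - 1 := by
    intro i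
    rw [Finset.card_erase_of_mem (Finset.mem_univ i), Finset.card_univ, Fintype.card_fin]
    have h1 : (1 : ℕ) ≤ n := by omega
    push_cast [Nat.cast_sub h1]
    ring
  have hsum_erase_r : ∀ i : Fin n, ∑ j ∈ Finset.univ.erase i, W (i, j) = ∑ l, W (i, l) := by
    intro i
    rw [Finset.sum_erase_eq_sub (Finset.mem_univ i), hdiag i, sub_zero]
  have hsum_erase_c : ∀ i : Fin n, ∑ j ∈ Finset.univ.erase i, W (j, i) = ∑ k, W (k, i) := by
    intro i
    rw [Finset.sum_erase_eq_sub (Finset.mem_univ i), hdiag i, sub_zero]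
  have hC : ∀ i, (∑ k, W (k, i)) = (μ + 2 - n) * ∑ l, W (i, l) := by
    intro i
    have hsum : ∑ j ∈ Finset.univ.erase i, ((∑ l, W (i, l)) + W (j, i))
        = ∑ j ∈ Finset.univ.erase i, ((μ + 1) * W (i, j)) :=
      Finset.sum_congr rfl (fun j hj => hstar i j (Ne.symm (Finset.mem_erase.mp hj).1))
    rw [Finset.sum_add_distrib, Finset.sum_const, hsum_erase_c i, ← Finset.mul_sum,
      hsum_erase_r i, nsmul_eq_mul, hcardn i] at hsum
    linear_combination hsum
  have hD : ∀ j, (∑ i, ∑ l, W (i, l)) = (μ + 1) * ∑ k, W (k, j) := by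
    intro j
    have hsum : ∑ i ∈ Finset.univ.erase j, ((∑ l, W (i, l)) + W (j, i))
        = ∑ i ∈ Finset.univ.erase j, ((μ + 1) * W (i, j)) :=
      Finset.sum_congr rfl (fun i hi => hstar i j (Finset.mem_erase.mp hi).1)
    have e1 : ∑ i ∈ Finset.univ.erase j, (∑ l, W (i, l))
        = (∑ i, ∑ l, W (i, l)) - ∑ l, W (j, l) :=
      Finset.sum_erase_eq_sub (Finset.mem_univ j)
    rw [Finset.sum_add_distrib, e1, hsum_erase_r j, ← Finset.mul_sum, hsum_erase_c j] at hsum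
    linear_combination hsum
  have hTeq : (n : ℝ) * (∑ i, ∑ l, W (i, l))
      = ((μ + 1) * (μ + 2 - n)) * (∑ i, ∑ l, W (i, l)) := by
    calc (n : ℝ) * (∑ i, ∑ l, W (i, l)) = ∑ _j : Fin n, (∑ i, ∑ l, W (i, l)) := by
          rw [Finset.sum_const, Finset.card_univ, Fintype.card_fin, nsmul_eq_mul]
      _ = ∑ j : Fin n, ((μ + 1) * ((μ + 2 - n) * ∑ l, W (j, l))) := by
          refine Finset.sum_congr rfl (fun j _ => ?_)
          rw [← hC j]
          exact hD j
      _ = ∑ j : Fin n, (((μ + 1) * (μ + 2 - n)) * ∑ l, W (j, l)) :=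
          Finset.sum_congr rfl (fun j _ => by ring)
      _ = ((μ + 1) * (μ + 2 - n)) * (∑ i, ∑ l, W (i, l)) := by rw [← Finset.mul_sum]
  have hT0 : (∑ i, ∑ l, W (i, l)) = 0 := by
    have hfac : ((μ + 2) * (μ - ((n : ℝ) - 1))) * (∑ i, ∑ l, W (i, l)) = 0 := by
      linear_combination -hTeq
    rcases mul_eq_zero.mp hfac with h | h
    · rcases mul_eq_zero.mp h with h' | h'
      · exact absurd (by linarith : μ = -2) hm2
      · exact absurd (by linarith [sub_eq_zero.mp h'] : μ = (n : ℝ) - 1) hn1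
    · exact h
  have hc0 : ∀ j, (∑ k, W (k, j)) = 0 := by
    intro j
    have h := hD j
    rw [hT0] at h
    rcases mul_eq_zero.mp h.symm with h' | h'
    · exact absurd (by linarith : μ = -1) hm1
    · exact h'
  have hr0 : ∀ i, (∑ l, W (i, l)) = 0 := by
    intro i
    have h := hC i
    rw [hc0 i] at h
    rcases mul_eq_zero.mp h.symm with h' | h'
    · exact absurd (by linarith : μ = (n : ℝ) - 2) hn2
    · exact h'
  funext p
  rcases p with ⟨i, j⟩
  by_cases hij : i = j
  · rcases hij with rfl
    simpa using hdiag i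
  · have e1 := hstar i j hij
    have e2 := hstar j i (Ne.symm hij)
    rw [hr0 i] at e1
    rw [hr0 j] at e2
    have hfac : (μ * (μ + 2)) * W (i, j) = 0 := by
      linear_combination -e2 - (μ + 1) * e1
    rcases mul_eq_zero.mp hfac with h | h
    · rcases mul_eq_zero.mp h with h' | h'
      · exact absurd h' hm0
      · exact absurd (by linarith : μ = -2) hm2
    · simpa using h

end
section
variable {n : ℕ}

def eE {n : ℕ} (i a : Fin n) : ℝ := if i = a then 1 else 0

@[simp] lemma eE_self (i : Fin n) : eE i i = 1 := if_pos rfl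

lemma eE_ne {i a : Fin n} (h : i ≠ a) : eE i a = 0 := if_neg h

@[simp] lemma eE_sum (a : Fin n) : ∑ l : Fin n, eE l a = 1 := by
  rw [show (fun l : Fin n => eE l a) = fun l => if l = a then (1:ℝ) else 0 from rfl,
    Finset.sum_ite_eq' Finset.univ a (fun _ => (1:ℝ))]
  simp

lemma eE_mul {a b : Fin n} (h : a ≠ b) (i : Fin n) : eE i a * eE i b = 0 := by
  by_cases hi : i = a
  · subst hi
    rw [eE_ne h, mul_zero]
  · rw [eE_ne hi, zero_mul]

lemma mem_nsub1 (n : ℕ) (hn : 3 < n) :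
    ((n : ℝ) - 1) ∈ spectrum ℝ (((Hgraph n).lineGraph).adjMatrix ℝ) := by
  rw [spec_iff]
  refine ⟨fun p => if p.1 = p.2 then 0 else 1, ?_, ?_, ?_⟩
  · intro h
    have h1 := congrFun h ((⟨0, by omega⟩ : Fin n), (⟨1, by omega⟩ : Fin n))
    simp [Fin.ext_iff] at h1
  · intro k
    simp
  · intro i j hij
    simp only
    have hs : ∑ l : Fin n, (if i = l then (0:ℝ) else 1) = (n : ℝ) - 1 := by
      have h1 : ∀ l : Fin n, (if i = l then (0:ℝ) else 1)
          = 1 - (if i = l then (1:ℝ) else 0) := fun l => by split_ifs <;> ring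
      rw [Finset.sum_congr rfl (fun l _ => h1 l), Finset.sum_sub_distrib,
        Finset.sum_const, Finset.card_univ, Fintype.card_fin, nsmul_eq_mul, mul_one,
        Finset.sum_ite_eq Finset.univ i (fun _ => (1:ℝ))]
      simp
    rw [hs, if_neg hij, if_neg (Ne.symm hij)]
    ring

lemma mem_neg1 (n : ℕ) (hn : 3 < n) :
    (-1 : ℝ) ∈ spectrum ℝ (((Hgraph n).lineGraph).adjMatrix ℝ) := by
  rw [spec_iff]
  set z0 : Fin n := ⟨0, by omega⟩ with hz0
  set z1 : Fin n := ⟨1, by omega⟩ with hz1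
  have hsumx : ∑ l : Fin n, (eE l z0 - eE l z1) = 0 := by
    rw [Finset.sum_sub_distrib, eE_sum, eE_sum]
    ring
  refine ⟨fun p => if p.1 = p.2 then 0 else eE p.2 z0 - eE p.2 z1, ?_, ?_, ?_⟩
  · intro h
    have h1 := congrFun h (z1, z0)
    simp only [hz0, hz1, eE, Fin.ext_iff] at h1
    norm_num at h1
  · intro k
    simp
  · intro i j hij
    simp only
    have h1 : ∀ l : Fin n, (if i = l then (0:ℝ) else eE l z0 - eE l z1)
        = (eE l z0 - eE l z1) - (if i = l then (eE l z0 - eE l z1) else 0) :=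
      fun l => by split_ifs <;> ring
    rw [Finset.sum_congr rfl (fun l _ => h1 l), Finset.sum_sub_distrib, hsumx,
      Finset.sum_ite_eq Finset.univ i (fun l => eE l z0 - eE l z1)]
    rw [if_neg hij, if_neg (Ne.symm hij)]
    simp only [Finset.mem_univ, if_true]
    ring

lemma mem_nsub2 (n : ℕ) (hn : 3 < n) :
    ((n : ℝ) - 2) ∈ spectrum ℝ (((Hgraph n).lineGraph).adjMatrix ℝ) := by
  rw [spec_iff]
  set z0 : Fin n := ⟨0, by omega⟩ with hz0
  set z1 : Fin n := ⟨1, by omega⟩ with hz1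
  set z2 : Fin n := ⟨2, by omega⟩ with hz2
  have hsumx : ∑ l : Fin n, (eE l z0 - eE l z1) = 0 := by
    rw [Finset.sum_sub_distrib, eE_sum, eE_sum]
    ring
  refine ⟨fun p => if p.1 = p.2 then 0 else
      ((n:ℝ) - 1) * (eE p.1 z0 - eE p.1 z1) + (eE p.2 z0 - eE p.2 z1), ?_, ?_, ?_⟩
  · intro h
    have h1 := congrFun h (z0, z2)
    simp only [hz0, hz1, hz2, eE, Fin.ext_iff] at h1
    norm_num at h1
    have h4 : (4 : ℝ) ≤ (n : ℝ) := by exact_mod_cast hn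
    linarith
  · intro k
    simp
  · intro i j hij
    simp only
    have h1 : ∀ l : Fin n,
        (if i = l then (0:ℝ) else ((n:ℝ) - 1) * (eE i z0 - eE i z1) + (eE l z0 - eE l z1))
        = (((n:ℝ) - 1) * (eE i z0 - eE i z1) + (eE l z0 - eE l z1))
          - (if i = l then (((n:ℝ) - 1) * (eE i z0 - eE i z1) + (eE l z0 - eE l z1)) else 0) :=
      fun l => by split_ifs <;> ring
    rw [Finset.sum_congr rfl (fun l _ => h1 l), Finset.sum_sub_distrib,
      Finset.sum_add_distrib, hsumx, Finset.sum_const, Finset.card_univ, Fintype.card_fin,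
      nsmul_eq_mul,
      Finset.sum_ite_eq Finset.univ i
        (fun l => ((n:ℝ) - 1) * (eE i z0 - eE i z1) + (eE l z0 - eE l z1))]
    rw [if_neg hij, if_neg (Ne.symm hij)]
    simp only [Finset.mem_univ, if_true]
    ring

lemma mem_zero (n : ℕ) (hn : 3 < n) :
    (0 : ℝ) ∈ spectrum ℝ (((Hgraph n).lineGraph).adjMatrix ℝ) := by
  rw [spec_iff]
  set z0 : Fin n := ⟨0, by omega⟩ with hz0
  set z1 : Fin n := ⟨1, by omega⟩ with hz1
  set z2 : Fin n := ⟨2, by omega⟩ with hz2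
  set z3 : Fin n := ⟨3, by omega⟩ with hz3
  refine ⟨fun p =>
      eE p.1 z0 * eE p.2 z1 + eE p.1 z1 * eE p.2 z0 + eE p.1 z2 * eE p.2 z3
        + eE p.1 z3 * eE p.2 z2
      - eE p.1 z0 * eE p.2 z3 - eE p.1 z3 * eE p.2 z0 - eE p.1 z1 * eE p.2 z2
        - eE p.1 z2 * eE p.2 z1, ?_, ?_, ?_⟩
  · intro h
    have h1 := congrFun h (z0, z1)
    simp only [hz0, hz1, hz2, hz3, eE, Fin.ext_iff] at h1
    norm_num at h1
  · intro k
    simp only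
    rw [eE_mul (a := z0) (b := z1) (by simp [hz0, hz1, Fin.ext_iff]) k,
      eE_mul (a := z1) (b := z0) (by simp [hz0, hz1, Fin.ext_iff]) k,
      eE_mul (a := z2) (b := z3) (by simp [hz2, hz3, Fin.ext_iff]) k,
      eE_mul (a := z3) (b := z2) (by simp [hz2, hz3, Fin.ext_iff]) k,
      eE_mul (a := z0) (b := z3) (by simp [hz0, hz3, Fin.ext_iff]) k,
      eE_mul (a := z3) (b := z0) (by simp [hz0, hz3, Fin.ext_iff]) k,
      eE_mul (a := z1) (b := z2) (by simp [hz1, hz2, Fin.ext_iff]) k,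
      eE_mul (a := z2) (b := z1) (by simp [hz1, hz2, Fin.ext_iff]) k]
    ring
  · intro i j hij
    simp only
    rw [show (fun l : Fin n =>
        eE i z0 * eE l z1 + eE i z1 * eE l z0 + eE i z2 * eE l z3 + eE i z3 * eE l z2
        - eE i z0 * eE l z3 - eE i z3 * eE l z0 - eE i z1 * eE l z2 - eE i z2 * eE l z1)
      = fun l => (eE i z0 * eE l z1 + eE i z1 * eE l z0 + eE i z2 * eE l z3
        + eE i z3 * eE l z2
        - eE i z0 * eE l z3 - eE i z3 * eE l z0 - eE i z1 * eE l z2 - eE i z2 * eE l z1)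
      from rfl]
    simp only [Finset.sum_sub_distrib, Finset.sum_add_distrib, ← Finset.mul_sum, eE_sum,
      mul_one]
    ring

lemma mem_neg2 (n : ℕ) (hn : 3 < n) :
    (-2 : ℝ) ∈ spectrum ℝ (((Hgraph n).lineGraph).adjMatrix ℝ) := by
  rw [spec_iff]
  set z0 : Fin n := ⟨0, by omega⟩ with hz0
  set z1 : Fin n := ⟨1, by omega⟩ with hz1
  set z2 : Fin n := ⟨2, by omega⟩ with hz2
  refine ⟨fun p =>
      eE p.1 z0 * eE p.2 z1 + eE p.1 z1 * eE p.2 z2 + eE p.1 z2 * eE p.2 z0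
      - eE p.1 z1 * eE p.2 z0 - eE p.1 z2 * eE p.2 z1 - eE p.1 z0 * eE p.2 z2, ?_, ?_, ?_⟩
  · intro h
    have h1 := congrFun h (z0, z1)
    simp only [hz0, hz1, hz2, eE, Fin.ext_iff] at h1
    norm_num at h1
  · intro k
    simp only
    rw [eE_mul (a := z0) (b := z1) (by simp [hz0, hz1, Fin.ext_iff]) k,
      eE_mul (a := z1) (b := z2) (by simp [hz1, hz2, Fin.ext_iff]) k,
      eE_mul (a := z2) (b := z0) (by simp [hz0, hz2, Fin.ext_iff]) k,
      eE_mul (a := z1) (b := z0) (by simp [hz0, hz1, Fin.ext_iff]) k,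
      eE_mul (a := z2) (b := z1) (by simp [hz1, hz2, Fin.ext_iff]) k,
      eE_mul (a := z0) (b := z2) (by simp [hz0, hz2, Fin.ext_iff]) k]
    ring
  · intro i j hij
    simp only
    simp only [Finset.sum_sub_distrib, Finset.sum_add_distrib, ← Finset.mul_sum, eE_sum,
      mul_one]
    ring

end
/-- For `n > 3`, the set of distinct eigenvalues of the adjacency matrix of `L(n)` is exactly
`{-2, -1, 0, n-2, n-1}`; in particular `L(n)` is integral with precisely five distinct
eigenvalues. -/
theorem lineGraph_spectrum (n : ℕ) (hn : 3 < n) :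
    spectrum ℝ (((Hgraph n).lineGraph).adjMatrix ℝ) =
      ({-2, -1, 0, (n : ℝ) - 2, (n : ℝ) - 1} : Set ℝ) ∧
    ∀ μ ∈ spectrum ℝ (((Hgraph n).lineGraph).adjMatrix ℝ), ∃ k : ℤ, μ = (k : ℝ) := by
  have hset : spectrum ℝ (((Hgraph n).lineGraph).adjMatrix ℝ) =
      ({-2, -1, 0, (n : ℝ) - 2, (n : ℝ) - 1} : Set ℝ) := by
    ext μ
    simp only [Set.mem_insert_iff, Set.mem_singleton_iff]
    constructor
    · intro hμ
      by_contra hcon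
      push_neg at hcon
      obtain ⟨h1, h2, h3, h4, h5⟩ := hcon
      rw [spec_iff] at hμ
      obtain ⟨W, hW0, hdiag, heq⟩ := hμ
      exact hW0 (eigen_zero n hn μ h1 h2 h3 h4 h5 W hdiag heq)
    · rintro (rfl | rfl | rfl | rfl | rfl)
      · exact mem_neg2 n hn
      · exact mem_neg1 n hn
      · exact mem_zero n hn
      · exact mem_nsub2 n hn
      · exact mem_nsub1 n hn
  refine ⟨hset, ?_⟩
  intro μ hμ
  rw [hset] at hμ
  simp only [Set.mem_insert_iff, Set.mem_singleton_iff] at hμ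
  rcases hμ with rfl | rfl | rfl | rfl | rfl
  · exact ⟨-2, by norm_num⟩
  · exact ⟨-1, by norm_num⟩
  · exact ⟨0, by norm_num⟩
  · exact ⟨(n : ℤ) - 2, by push_cast; ring⟩
  · exact ⟨(n : ℤ) - 1, by push_cast; ring⟩
end
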